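/- Let u⋆ be the solution of K u⋆ = f and ũ⋆ any solution of 𝒫 K ũ⋆ = 𝒫 f. For any ũ ∈ ℝ^{m+n}, if u = Z_k (Z_kᵀ K Z_k)⁻¹ Z_kᵀ f + 𝒫ᵀ ũ, then ‖u⋆ − u‖_H ≤ ‖ũ⋆ − ũ‖_H. -/

import Mathlib

open Matrix

/-- The `G`-norm of a vector, `‖v‖_G = √(vᵀ G v)`. -/
noncomputable def gNorm {p : Type*} [Fintype p] (G : Matrix p p ℝ) (v : p → ℝ) : ℝ :=
  Real.sqrt (v ⬝ᵥ G.mulVec v)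

lemma diag_eq_one' {k : ℕ} (f : Fin k → ℝ) (h : ∀ i, f i = 1) :
    Matrix.diagonal f = 1 := by
  rw [show f = fun _ => 1 from funext h, Matrix.diagonal_one]

lemma diag_eq_zero' {k : ℕ} (f : Fin k → ℝ) (h : ∀ i, f i = 0) :
    Matrix.diagonal f = 0 := by
  rw [show f = fun _ => 0 from funext h, Matrix.diagonal_zero]

lemma dot_sum_elim' {m n : Type*} [Fintype m] [Fintype n] (v : m ⊕ n → ℝ) (a : m → ℝ)
    (b : n → ℝ) : v ⬝ᵥ Sum.elim a b = (v ∘ Sum.inl) ⬝ᵥ a + (v ∘ Sum.inr) ⬝ᵥ b := by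
  nth_rewrite 1 [← Sum.elim_comp_inl_inr v]
  rw [sumElim_dotProduct_sumElim]

lemma proj_gNorm_le' {p : Type*} [Fintype p] [DecidableEq p]
    (H Pcal : Matrix p p ℝ) (hHP : Pcal * H = H * Pcalᵀ) (hProj : Pcalᵀ * Pcalᵀ = Pcalᵀ)
    (hHpsd : ∀ v : p → ℝ, 0 ≤ v ⬝ᵥ H *ᵥ v) (y : p → ℝ) :
    gNorm H (Pcalᵀ *ᵥ y) ≤ gNorm H y := by
  unfold gNorm
  apply Real.sqrt_le_sqrt
  have hPP2 : Pcal * (H * Pcalᵀ) = H * Pcalᵀ := by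
    rw [← Matrix.mul_assoc, hHP, Matrix.mul_assoc, hProj]
  have hww : (Pcalᵀ *ᵥ y) ⬝ᵥ H *ᵥ (Pcalᵀ *ᵥ y) = y ⬝ᵥ (H * Pcalᵀ) *ᵥ y := by
    rw [Matrix.mulVec_mulVec, Matrix.mulVec_transpose, ← Matrix.dotProduct_mulVec,
      Matrix.mulVec_mulVec, hPP2]
  have hwy : (Pcalᵀ *ᵥ y) ⬝ᵥ H *ᵥ y = y ⬝ᵥ (H * Pcalᵀ) *ᵥ y := by
    rw [Matrix.mulVec_transpose, ← Matrix.dotProduct_mulVec, Matrix.mulVec_mulVec, hHP]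
  have hyw : y ⬝ᵥ H *ᵥ (Pcalᵀ *ᵥ y) = y ⬝ᵥ (H * Pcalᵀ) *ᵥ y := by
    rw [Matrix.mulVec_mulVec]
  have hr : 0 ≤ (y - Pcalᵀ *ᵥ y) ⬝ᵥ H *ᵥ (y - Pcalᵀ *ᵥ y) := hHpsd _
  rw [Matrix.mulVec_sub, sub_dotProduct, dotProduct_sub, dotProduct_sub] at hr
  linarith

/-- If `u⋆` solves `K u⋆ = f`, `ũ⋆` solves `Pcal K ũ⋆ = Pcal f`, and
`u = Z_k (Z_kᵀ K Z_k)⁻¹ Z_kᵀ f + Pcalᵀ ũ`, then `‖u⋆ − u‖_H ≤ ‖ũ⋆ − ũ‖_H`. -/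
theorem deflated_error_bound (m n k : ℕ)
    (M : Matrix (Fin m) (Fin m) ℝ) (N : Matrix (Fin n) (Fin n) ℝ)
    (A : Matrix (Fin m) (Fin n) ℝ)
    (hM : M.PosDef) (hN : N.PosDef)
    (Uk : Matrix (Fin m) (Fin k) ℝ) (Vk : Matrix (Fin n) (Fin k) ℝ)
    (Sig : Matrix (Fin k) (Fin k) ℝ)
    (hSigDiag : ∀ i j, i ≠ j → Sig i j = 0) (hSigNonneg : ∀ i, 0 ≤ Sig i i)
    (hUk : Ukᵀ * M * Uk = 1) (hVk : Vkᵀ * N * Vk = 1)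
    (hAV : A * Vk = M * Uk * Sig) (hAU : Aᵀ * Uk = N * Vk * Sig)
    (P : Matrix (Fin m) (Fin m) ℝ) (hP : P = 1 - M * Uk * Ukᵀ)
    (Q : Matrix (Fin n) (Fin n) ℝ) (hQ : Q = 1 - Vk * Vkᵀ * N)
    (K : Matrix (Fin m ⊕ Fin n) (Fin m ⊕ Fin n) ℝ)
    (hK : K = Matrix.fromBlocks M A Aᵀ (-N))
    (H : Matrix (Fin m ⊕ Fin n) (Fin m ⊕ Fin n) ℝ)
    (hH : H = Matrix.fromBlocks M 0 0 N)
    (Pcal : Matrix (Fin m ⊕ Fin n) (Fin m ⊕ Fin n) ℝ)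
    (hPcal : Pcal = Matrix.fromBlocks P 0 0 Qᵀ)
    (Z : Matrix (Fin m ⊕ Fin n) (Fin k ⊕ Fin k) ℝ)
    (hZ : Z = Matrix.fromBlocks Uk 0 0 Vk)
    (f ustar utstar ut u : Fin m ⊕ Fin n → ℝ)
    (hustar : K.mulVec ustar = f)
    (hutstar : (Pcal * K).mulVec utstar = Pcal.mulVec f)
    (hu : u = Z.mulVec (((Zᵀ * K * Z)⁻¹).mulVec (Zᵀ.mulVec f)) + Pcalᵀ.mulVec ut) :
    gNorm H (ustar - u) ≤ gNorm H (utstar - ut) := by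
  classical
  -- Symmetry of the data
  have hMs : Mᵀ = M := by
    simpa [Matrix.conjTranspose_eq_transpose_of_trivial] using hM.1.eq
  have hNs : Nᵀ = N := by
    simpa [Matrix.conjTranspose_eq_transpose_of_trivial] using hN.1.eq
  have hSigT : Sigᵀ = Sig := by
    ext i j
    by_cases h : i = j
    · subst h; rfl
    · rw [Matrix.transpose_apply, hSigDiag j i (Ne.symm h), hSigDiag i j h]
  -- Transposed elliptic singular triplet relations
  have hUA : Ukᵀ * A = Sig * (Vkᵀ * N) := by
    have h := congrArg Matrix.transpose hAU
    rw [Matrix.transpose_mul, Matrix.transpose_mul, Matrix.transpose_transpose, hSigT,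
      Matrix.transpose_mul, hNs] at h
    rw [h]
  have hVA : Vkᵀ * Aᵀ = Sig * (Ukᵀ * M) := by
    have h := congrArg Matrix.transpose hAV
    rw [Matrix.transpose_mul, Matrix.transpose_mul, hSigT, Matrix.transpose_mul, hMs] at h
    rw [h]
  -- Basic projector identities
  have hPt : Pᵀ = 1 - Uk * (Ukᵀ * M) := by
    rw [hP, Matrix.transpose_sub, Matrix.transpose_one, Matrix.transpose_mul,
      Matrix.transpose_mul, Matrix.transpose_transpose, hMs]
  have hQ' : Q = 1 - Vk * (Vkᵀ * N) := by rw [hQ, Matrix.mul_assoc]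
  have hQt : Qᵀ = 1 - N * (Vk * Vkᵀ) := by
    rw [hQ, Matrix.transpose_sub, Matrix.transpose_one, Matrix.transpose_mul, hNs,
      Matrix.transpose_mul, Matrix.transpose_transpose]
  have hPtU : Pᵀ * Uk = 0 := by
    rw [hPt, Matrix.sub_mul, Matrix.one_mul, Matrix.mul_assoc Uk (Ukᵀ * M) Uk, hUk,
      Matrix.mul_one, sub_self]
  have hQV : Q * Vk = 0 := by
    rw [hQ', Matrix.sub_mul, Matrix.one_mul, Matrix.mul_assoc Vk (Vkᵀ * N) Vk, hVk,
      Matrix.mul_one, sub_self]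
  have hPtP : Pᵀ * Pᵀ = Pᵀ := by
    nth_rewrite 2 [hPt]
    rw [Matrix.mul_sub, Matrix.mul_one, ← Matrix.mul_assoc, hPtU, Matrix.zero_mul, sub_zero]
  have hQQ : Q * Q = Q := by
    nth_rewrite 2 [hQ']
    rw [Matrix.mul_sub, Matrix.mul_one, ← Matrix.mul_assoc, hQV, Matrix.zero_mul, sub_zero]
  have hPM : P * M = M * Pᵀ := by
    rw [hPt, hP, Matrix.sub_mul, Matrix.mul_sub, Matrix.one_mul, Matrix.mul_one]
    simp only [Matrix.mul_assoc]
  have hQtN : Qᵀ * N = N * Q := by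
    rw [hQt, hQ', Matrix.sub_mul, Matrix.mul_sub, Matrix.one_mul, Matrix.mul_one]
    simp only [Matrix.mul_assoc]
  have hPA : P * A = A * Q := by
    rw [hP, hQ', Matrix.sub_mul, Matrix.mul_sub, Matrix.one_mul, Matrix.mul_one,
      ← Matrix.mul_assoc A Vk (Vkᵀ * N), hAV, Matrix.mul_assoc (M * Uk) Ukᵀ A, hUA]
    simp only [Matrix.mul_assoc]
  have hQtA : Qᵀ * Aᵀ = Aᵀ * Pᵀ := by
    rw [hQt, hPt, Matrix.sub_mul, Matrix.mul_sub, Matrix.one_mul, Matrix.mul_one,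
      ← Matrix.mul_assoc Aᵀ Uk (Ukᵀ * M), hAU]
    simp only [Matrix.mul_assoc]
    rw [hVA]
  have hUAV : Ukᵀ * A * Vk = Sig := by
    rw [hUA, Matrix.mul_assoc, hVk, Matrix.mul_one]
  have hVAU : Vkᵀ * Aᵀ * Uk = Sig := by
    rw [hVA, Matrix.mul_assoc, hUk, Matrix.mul_one]
  -- Block-matrix identities
  have hPcalT : Pcalᵀ = Matrix.fromBlocks Pᵀ 0 0 Q := by
    rw [hPcal, Matrix.fromBlocks_transpose]
    simp
  have hPcalTZ : Pcalᵀ * Z = 0 := by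
    rw [hPcalT, hZ, Matrix.fromBlocks_multiply]
    simp [hPtU, hQV]
  have hZH : Zᵀ * H = Matrix.fromBlocks (Ukᵀ * M) 0 0 (Vkᵀ * N) := by
    rw [hZ, hH, Matrix.fromBlocks_transpose, Matrix.fromBlocks_multiply]
    simp
  have hT : Zᵀ * K * Z = Matrix.fromBlocks 1 Sig Sig (-1) := by
    rw [hZ, hK, Matrix.fromBlocks_transpose, Matrix.fromBlocks_multiply,
      Matrix.fromBlocks_multiply]
    simp only [Matrix.transpose_zero, Matrix.zero_mul, Matrix.mul_zero, add_zero, zero_add,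
      Matrix.mul_neg, Matrix.neg_mul, neg_zero]
    rw [hUk, hVk, hUAV, hVAU]
  have hDecomp : Z * (Zᵀ * H) + Pcalᵀ = 1 := by
    rw [hPcalT, hZH, hZ, Matrix.fromBlocks_multiply, hPt, hQ']
    simp only [Matrix.zero_mul, Matrix.mul_zero, add_zero, zero_add]
    rw [Matrix.fromBlocks_add, ← Matrix.fromBlocks_one]
    simp
  have hKPcal : K * Pcalᵀ = Pcal * K := by
    rw [hPcalT, hK, hPcal, Matrix.fromBlocks_multiply, Matrix.fromBlocks_multiply]
    simp only [Matrix.zero_mul, Matrix.mul_zero, add_zero, zero_add, neg_zero,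
      Matrix.mul_neg, Matrix.neg_mul]
    rw [hPM, hPA, hQtA, hQtN]
  have hHP : Pcal * H = H * Pcalᵀ := by
    rw [hPcalT, hH, hPcal, Matrix.fromBlocks_multiply, Matrix.fromBlocks_multiply]
    simp only [Matrix.zero_mul, Matrix.mul_zero, add_zero, zero_add]
    rw [hPM, hQtN]
  have hProj : Pcalᵀ * Pcalᵀ = Pcalᵀ := by
    rw [hPcalT, Matrix.fromBlocks_multiply]
    simp [hPtP, hQQ]
  -- The inverse of Zᵀ K Z
  set d : Fin k → ℝ := fun i => Sig i i with hd
  have hSigD : Sig = Matrix.diagonal d := by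
    ext i j
    by_cases h : i = j
    · subst h; simp [hd]
    · rw [hSigDiag i j h, Matrix.diagonal_apply_ne _ h]
  have hpos : ∀ i, (1 : ℝ) + d i ^ 2 ≠ 0 := fun i => by positivity
  set S : Matrix (Fin k ⊕ Fin k) (Fin k ⊕ Fin k) ℝ :=
    Matrix.fromBlocks (Matrix.diagonal fun i => (1 + d i ^ 2)⁻¹)
      (Matrix.diagonal fun i => d i * (1 + d i ^ 2)⁻¹)
      (Matrix.diagonal fun i => d i * (1 + d i ^ 2)⁻¹)
      (-(Matrix.diagonal fun i => (1 + d i ^ 2)⁻¹)) with hS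
  have hTS : Matrix.fromBlocks 1 Sig Sig (-1) * S = 1 := by
    rw [hS, hSigD, Matrix.fromBlocks_multiply, ← Matrix.fromBlocks_one, Matrix.fromBlocks_inj]
    refine ⟨?_, ?_, ?_, ?_⟩ <;>
      simp only [Matrix.one_mul, Matrix.mul_neg, Matrix.neg_mul, neg_neg,
        Matrix.diagonal_mul_diagonal, Matrix.diagonal_neg, Matrix.diagonal_add]
    · apply diag_eq_one'; intro i; field_simp
    · apply diag_eq_zero'; intro i; ring
    · apply diag_eq_zero'; intro i; ring
    · apply diag_eq_one'; intro i; field_simp; ring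
  have hST : S * Matrix.fromBlocks 1 Sig Sig (-1) = 1 := by
    have hTsymm : (Matrix.fromBlocks 1 Sig Sig (-1))ᵀ = Matrix.fromBlocks 1 Sig Sig (-1) := by
      rw [Matrix.fromBlocks_transpose, Matrix.transpose_one, Matrix.transpose_neg,
        Matrix.transpose_one, hSigT]
    have hSsymm : Sᵀ = S := by
      rw [hS, Matrix.fromBlocks_transpose, Matrix.transpose_neg]
      simp [Matrix.diagonal_transpose]
    have h := congrArg Matrix.transpose hTS
    rwa [Matrix.transpose_mul, hTsymm, hSsymm, Matrix.transpose_one] at h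
  have hTinv : (Zᵀ * K * Z)⁻¹ = S := by
    rw [hT]
    exact Matrix.inv_eq_right_inv hTS
  -- Deflation identities at the vector level
  have hZPc : Zᵀ * Pcal = 0 := by
    have h := congrArg Matrix.transpose hPcalTZ
    rwa [Matrix.transpose_mul, Matrix.transpose_transpose, Matrix.transpose_zero] at h
  have hZK : Zᵀ * K = Zᵀ * K * Z * (Zᵀ * H) := by
    calc Zᵀ * K = Zᵀ * K * (Z * (Zᵀ * H) + Pcalᵀ) := by rw [hDecomp, Matrix.mul_one]
    _ = Zᵀ * K * Z * (Zᵀ * H) + Zᵀ * (K * Pcalᵀ) := by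
        rw [Matrix.mul_add, Matrix.mul_assoc (Zᵀ * K) Z (Zᵀ * H), Matrix.mul_assoc,
          Matrix.mul_assoc]
    _ = Zᵀ * K * Z * (Zᵀ * H) := by
        rw [hKPcal, ← Matrix.mul_assoc Zᵀ Pcal K, hZPc, Matrix.zero_mul, add_zero]
  set a : Fin k ⊕ Fin k → ℝ := (Zᵀ * H) *ᵥ ustar with ha
  have hTa : (Zᵀ * K * Z) *ᵥ a = Zᵀ *ᵥ f := by
    rw [ha, Matrix.mulVec_mulVec, ← hZK, ← Matrix.mulVec_mulVec, hustar]
  have hinva : ((Zᵀ * K * Z)⁻¹) *ᵥ (Zᵀ *ᵥ f) = a := by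
    rw [← hTa, Matrix.mulVec_mulVec, hTinv, hT, hST, Matrix.one_mulVec]
  have hustar_dec : ustar = Z *ᵥ a + Pcalᵀ *ᵥ ustar := by
    conv_lhs => rw [← Matrix.one_mulVec ustar, ← hDecomp]
    rw [Matrix.add_mulVec, ha, Matrix.mulVec_mulVec]
  -- K is injective
  have hKinj : ∀ x : Fin m ⊕ Fin n → ℝ, K *ᵥ x = 0 → x = 0 := by
    intro x hx
    rw [hK, Matrix.fromBlocks_mulVec] at hx
    have h1 : M *ᵥ (x ∘ Sum.inl) + A *ᵥ (x ∘ Sum.inr) = 0 := by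
      funext i; exact congrFun hx (Sum.inl i)
    have h2 : Aᵀ *ᵥ (x ∘ Sum.inl) + (-N) *ᵥ (x ∘ Sum.inr) = 0 := by
      funext i; exact congrFun hx (Sum.inr i)
    have e1 : (x ∘ Sum.inl) ⬝ᵥ M *ᵥ (x ∘ Sum.inl) + (x ∘ Sum.inl) ⬝ᵥ A *ᵥ (x ∘ Sum.inr) = 0 := by
      rw [← dotProduct_add, h1, dotProduct_zero]
    have e2 : (x ∘ Sum.inr) ⬝ᵥ Aᵀ *ᵥ (x ∘ Sum.inl) - (x ∘ Sum.inr) ⬝ᵥ N *ᵥ (x ∘ Sum.inr) = 0 := by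
      have h3 := congrArg (fun w => (x ∘ Sum.inr) ⬝ᵥ w) h2
      simpa [Matrix.neg_mulVec, dotProduct_add, dotProduct_neg, sub_eq_add_neg] using h3
    have hcross : (x ∘ Sum.inl) ⬝ᵥ A *ᵥ (x ∘ Sum.inr)
        = (x ∘ Sum.inr) ⬝ᵥ Aᵀ *ᵥ (x ∘ Sum.inl) := by
      rw [Matrix.dotProduct_mulVec, Matrix.mulVec_transpose, dotProduct_comm]
    have hx1 : x ∘ Sum.inl = 0 := by
      by_contra hne
      have hp := hM.dotProduct_mulVec_pos hne
      have hp2 := hN.posSemidef.dotProduct_mulVec_nonneg (x ∘ Sum.inr)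
      simp only [star_trivial] at hp hp2
      linarith
    have hx2 : x ∘ Sum.inr = 0 := by
      by_contra hne
      have hp := hN.dotProduct_mulVec_pos hne
      have hp2 := hM.posSemidef.dotProduct_mulVec_nonneg (x ∘ Sum.inl)
      simp only [star_trivial] at hp hp2
      linarith
    funext i
    cases i with
    | inl i => exact congrFun hx1 i
    | inr i => exact congrFun hx2 i
  -- Pcalᵀ utstar = Pcalᵀ ustar
  have hPP : Pcalᵀ *ᵥ utstar = Pcalᵀ *ᵥ ustar := by
    have h0 : K *ᵥ (Pcalᵀ *ᵥ (utstar - ustar)) = 0 := by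
      rw [Matrix.mulVec_mulVec, hKPcal, Matrix.mulVec_sub, hutstar, ← Matrix.mulVec_mulVec,
        hustar, sub_self]
    have h1 := hKinj _ h0
    rw [Matrix.mulVec_sub, sub_eq_zero] at h1
    exact h1
  -- The key error identity
  have key : ustar - u = Pcalᵀ *ᵥ (utstar - ut) := by
    calc ustar - u = (Z *ᵥ a + Pcalᵀ *ᵥ ustar) - (Z *ᵥ a + Pcalᵀ *ᵥ ut) := by
          rw [← hustar_dec, hu, hinva]
    _ = Pcalᵀ *ᵥ ustar - Pcalᵀ *ᵥ ut := by abel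
    _ = Pcalᵀ *ᵥ (utstar - ut) := by rw [Matrix.mulVec_sub, hPP]
  -- H is positive semidefinite
  have hHpsd : ∀ v : Fin m ⊕ Fin n → ℝ, 0 ≤ v ⬝ᵥ H *ᵥ v := by
    intro v
    rw [hH, Matrix.fromBlocks_mulVec, Matrix.zero_mulVec, Matrix.zero_mulVec, add_zero,
      zero_add, dot_sum_elim']
    have h1 := hM.posSemidef.dotProduct_mulVec_nonneg (v ∘ Sum.inl)
    have h2 := hN.posSemidef.dotProduct_mulVec_nonneg (v ∘ Sum.inr)
    simp only [star_trivial] at h1 h2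
    positivity
  -- Final inequality
  rw [key]
  exact proj_gNorm_le' H Pcal hHP hProj hHpsd (utstar - ut)
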